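/- arXiv:2604.20832 — 3 statements merged into one kernel-verified Lean document; each statement's English description precedes it below -/
import Mathlib

section
/- Let S ⊆ ℝ^m be a nonempty compact convex set, A a real n×m matrix, ρ > 0, and v ∈ ℝ^n. Suppose β⋆ ∈ S minimizes the function β ↦ ‖Aβ + ρv‖² over S. Then y⋆ := v + (1/ρ) A β⋆ is the unique global minimizer over ℝ^n of F(y) = sup_{β ∈ S} (−⟨y, Aβ⟩) + (ρ/2)‖y − v‖²; that is, y⋆ = prox_{f̃/ρ}(v) where f̃(y) = sup_{β ∈ S}(−⟨y, Aβ⟩). -/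
open RealInnerProductSpace

/-- The objective of the proximal subproblem arising in the ADMM y-update:
`F(y) = sup_{β ∈ S} (−⟨y, Aβ⟩) + (ρ/2)‖y − v‖²`. -/
noncomputable def proxObjective (n m : ℕ) (S : Set (EuclideanSpace ℝ (Fin m)))
    (A : Matrix (Fin n) (Fin m) ℝ) (ρ : ℝ) (v : EuclideanSpace ℝ (Fin n))
    (y : EuclideanSpace ℝ (Fin n)) : ℝ :=
  sSup ((fun β => -(inner ℝ y (Matrix.toEuclideanLin A β) : ℝ)) '' S) + ρ / 2 * ‖y - v‖ ^ 2

private lemma quad_identity {n : ℕ} (ρ : ℝ) (hρ : 0 < ρ)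
    (v u z : EuclideanSpace ℝ (Fin n)) :
    -⟪z, u⟫ + ρ / 2 * ‖z - v‖ ^ 2
      = -⟪v + ρ⁻¹ • u, u⟫ + ρ / 2 * ‖(v + ρ⁻¹ • u) - v‖ ^ 2
        + ρ / 2 * ‖z - (v + ρ⁻¹ • u)‖ ^ 2 := by
  have h1 : ‖z - v‖ ^ 2 = ⟪z - v, z - v⟫ := (real_inner_self_eq_norm_sq _).symm
  have h2 : ‖(v + ρ⁻¹ • u) - v‖ ^ 2 = ⟪(v + ρ⁻¹ • u) - v, (v + ρ⁻¹ • u) - v⟫ :=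
    (real_inner_self_eq_norm_sq _).symm
  have h3 : ‖z - (v + ρ⁻¹ • u)‖ ^ 2 = ⟪z - (v + ρ⁻¹ • u), z - (v + ρ⁻¹ • u)⟫ :=
    (real_inner_self_eq_norm_sq _).symm
  rw [h1, h2, h3]
  simp only [inner_sub_left, inner_sub_right, inner_add_left, inner_add_right,
    real_inner_smul_left, real_inner_smul_right, real_inner_comm u z, real_inner_comm u v,
    real_inner_comm v z]
  field_simp
  ring

private lemma prox_aux (n m : ℕ) (S : Set (EuclideanSpace ℝ (Fin m)))
    (hSne : S.Nonempty) (hScp : IsCompact S) (hScv : Convex ℝ S)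
    (T : EuclideanSpace ℝ (Fin m) →ₗ[ℝ] EuclideanSpace ℝ (Fin n))
    (ρ : ℝ) (hρ : 0 < ρ) (v : EuclideanSpace ℝ (Fin n))
    (βstar : EuclideanSpace ℝ (Fin m)) (hβstar : βstar ∈ S)
    (hmin : ∀ β ∈ S, ‖T βstar + ρ • v‖ ^ 2 ≤ ‖T β + ρ • v‖ ^ 2) :
    (∀ z : EuclideanSpace ℝ (Fin n),
        sSup ((fun β => -⟪v + ρ⁻¹ • T βstar, T β⟫) '' S)
            + ρ / 2 * ‖(v + ρ⁻¹ • T βstar) - v‖ ^ 2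
          ≤ sSup ((fun β => -⟪z, T β⟫) '' S) + ρ / 2 * ‖z - v‖ ^ 2) ∧
    (∀ y : EuclideanSpace ℝ (Fin n),
        (∀ z : EuclideanSpace ℝ (Fin n),
            sSup ((fun β => -⟪y, T β⟫) '' S) + ρ / 2 * ‖y - v‖ ^ 2
              ≤ sSup ((fun β => -⟪z, T β⟫) '' S) + ρ / 2 * ‖z - v‖ ^ 2)
          → y = v + ρ⁻¹ • T βstar) := by
  set u : EuclideanSpace ℝ (Fin n) := T βstar with hu
  set ystar : EuclideanSpace ℝ (Fin n) := v + ρ⁻¹ • u with hy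
  have hTcont : Continuous T := T.continuous_of_finiteDimensional
  have hbdd : ∀ z : EuclideanSpace ℝ (Fin n), BddAbove ((fun β => -⟪z, T β⟫) '' S) := by
    intro z
    exact (hScp.image ((continuous_const.inner hTcont).neg)).bddAbove
  have hmem : ∀ z : EuclideanSpace ℝ (Fin n),
      -⟪z, u⟫ ∈ (fun β => -⟪z, T β⟫) '' S := fun z => ⟨βstar, hβstar, rfl⟩
  -- variational inequality
  have hVI : ∀ β ∈ S, 0 ≤ ⟪u + ρ • v, T β - u⟫ := by
    intro β hβ
    set d : EuclideanSpace ℝ (Fin n) := T β - u with hd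
    set c : ℝ := ⟪u + ρ • v, d⟫ with hc
    set D : ℝ := ‖d‖ ^ 2 with hD
    have hDnn : 0 ≤ D := by positivity
    have key : ∀ t : ℝ, 0 ≤ t → t ≤ 1 → 0 ≤ 2 * (t * c) + t ^ 2 * D := by
      intro t ht0 ht1
      have hmemS : βstar + t • (β - βstar) ∈ S := by
        have h := hScv hβstar hβ (by linarith : (0:ℝ) ≤ 1 - t) ht0 (by ring)
        convert h using 1
        module
      have h2 := hmin _ hmemS
      have hTeq : T (βstar + t • (β - βstar)) + ρ • v = (u + ρ • v) + t • d := by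
        simp only [hd, hu, map_add, map_smul, map_sub]
        module
      rw [hTeq] at h2
      have hexp : ‖(u + ρ • v) + t • d‖ ^ 2
          = ‖u + ρ • v‖ ^ 2 + 2 * (t * c) + t ^ 2 * D := by
        rw [norm_add_sq_real, real_inner_smul_right, norm_smul, Real.norm_eq_abs,
          mul_pow, sq_abs, hc, hD]
      rw [hexp] at h2
      linarith
    by_contra hcneg
    push_neg at hcneg
    set t : ℝ := min 1 (-c / (D + 1)) with htdef
    have hDpos : (0:ℝ) < D + 1 := by linarith
    have ht0 : 0 < t := lt_min one_pos (div_pos (by linarith) hDpos)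
    have ht1 : t ≤ 1 := min_le_left _ _
    have ht2 : t * (D + 1) ≤ -c := by
      have h := min_le_right 1 (-c / (D + 1))
      calc t * (D + 1) ≤ (-c / (D + 1)) * (D + 1) := mul_le_mul_of_nonneg_right h hDpos.le
        _ = -c := by field_simp
    have hk := key t ht0.le ht1
    have h3 : t * D + t + c ≤ 0 := by nlinarith [ht2]
    have hB : t * (t * D + t + c) ≤ 0 := mul_nonpos_of_nonneg_of_nonpos ht0.le h3
    have htc : t * c < 0 := mul_neg_of_pos_of_neg ht0 hcneg
    nlinarith [hk, hB, htc, mul_pos ht0 ht0]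
  have hsup_le : ∀ β ∈ S, -⟪ystar, T β⟫ ≤ -⟪ystar, u⟫ := by
    intro β hβ
    have h := hVI β hβ
    have hyeq : ystar = ρ⁻¹ • (u + ρ • v) := by
      rw [hy, smul_add, smul_smul, inv_mul_cancel₀ hρ.ne', one_smul]
      abel
    have hnn : (0:ℝ) ≤ ⟪ystar, T β - u⟫ := by
      rw [hyeq, real_inner_smul_left]
      exact mul_nonneg (inv_nonneg.mpr hρ.le) h
    rw [inner_sub_right] at hnn
    linarith
  have hsup_eq : sSup ((fun β => -⟪ystar, T β⟫) '' S) = -⟪ystar, u⟫ := by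
    refine le_antisymm (csSup_le (hSne.image _) ?_) (le_csSup (hbdd ystar) (hmem ystar))
    rintro x ⟨β, hβ, rfl⟩
    exact hsup_le β hβ
  have hcore : ∀ z : EuclideanSpace ℝ (Fin n),
      (sSup ((fun β => -⟪ystar, T β⟫) '' S) + ρ / 2 * ‖ystar - v‖ ^ 2)
          + ρ / 2 * ‖z - ystar‖ ^ 2
        ≤ sSup ((fun β => -⟪z, T β⟫) '' S) + ρ / 2 * ‖z - v‖ ^ 2 := by
    intro z
    have h1 : -⟪z, u⟫ ≤ sSup ((fun β => -⟪z, T β⟫) '' S) := le_csSup (hbdd z) (hmem z)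
    have h2 := quad_identity ρ hρ v u z
    rw [← hy] at h2
    rw [hsup_eq]
    linarith
  constructor
  · intro z
    have h := hcore z
    have hnn : 0 ≤ ρ / 2 * ‖z - ystar‖ ^ 2 := by positivity
    linarith
  · intro y hymin
    have h1 := hcore y
    have h2 := hymin ystar
    have h3 : ρ / 2 * ‖y - ystar‖ ^ 2 ≤ 0 := by linarith
    have h4 : ‖y - ystar‖ ^ 2 ≤ 0 := by
      rcases le_or_gt (‖y - ystar‖ ^ 2) 0 with h | h
      · exact h
      · nlinarith [h3, hρ]
    have h5 : ‖y - ystar‖ ^ 2 = 0 := le_antisymm h4 (sq_nonneg _)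
    have h6 : ‖y - ystar‖ = 0 := by
      have := sq_eq_zero_iff.mp h5
      simpa using this
    exact sub_eq_zero.mp (norm_eq_zero.mp h6)

/-- If `β⋆ ∈ S` minimizes `β ↦ ‖Aβ + ρv‖²` over the nonempty compact convex
set `S` (a generalized projection of `−ρv` onto `S`), then `y⋆ = v + (1/ρ)Aβ⋆` is the
unique global minimizer of `F(y) = sup_{β ∈ S}(−⟨y, Aβ⟩) + (ρ/2)‖y − v‖²`, i.e.
`y⋆ = prox_{f̃/ρ}(v)`. -/
theorem prox_via_generalized_projection (n m : ℕ) (S : Set (EuclideanSpace ℝ (Fin m)))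
    (hSne : S.Nonempty) (hScp : IsCompact S) (hScv : Convex ℝ S)
    (A : Matrix (Fin n) (Fin m) ℝ) (ρ : ℝ) (hρ : 0 < ρ)
    (v : EuclideanSpace ℝ (Fin n))
    (βstar : EuclideanSpace ℝ (Fin m)) (hβstar : βstar ∈ S)
    (hmin : ∀ β ∈ S, ‖Matrix.toEuclideanLin A βstar + ρ • v‖ ^ 2
        ≤ ‖Matrix.toEuclideanLin A β + ρ • v‖ ^ 2) :
    (∀ z : EuclideanSpace ℝ (Fin n),
        proxObjective n m S A ρ v (v + ρ⁻¹ • Matrix.toEuclideanLin A βstar)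
          ≤ proxObjective n m S A ρ v z) ∧
    (∀ y : EuclideanSpace ℝ (Fin n),
        (∀ z : EuclideanSpace ℝ (Fin n), proxObjective n m S A ρ v y ≤ proxObjective n m S A ρ v z)
          → y = v + ρ⁻¹ • Matrix.toEuclideanLin A βstar) := by
  exact prox_aux n m S hSne hScp hScv (Matrix.toEuclideanLin A) ρ hρ v βstar hβstar hmin
end

section
/- Let S ⊆ ℝ^m be a nonempty compact convex set, A a real n×m matrix, ρ > 0, and v ∈ ℝ^n. Then the optimal value of the proximal subproblem satisfies min_{y ∈ ℝ^n} [ sup_{β ∈ S} (−⟨y, Aβ⟩) + (ρ/2)‖y − v‖² ] = (ρ/2)‖v‖² − (1/(2ρ)) · min_{β ∈ S} ‖Aβ + ρv‖². -/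
/-- The optimal value of the proximal subproblem satisfies
`min_y [sup_{β ∈ S}(−⟨y, Aβ⟩) + (ρ/2)‖y − v‖²] = (ρ/2)‖v‖² − (1/(2ρ)) min_{β ∈ S} ‖Aβ + ρv‖²`
for `S ⊆ ℝ^m` nonempty compact convex, `A` an `n×m` real matrix, `ρ > 0`, `v ∈ ℝ^n`. -/
theorem prox_subproblem_optimal_value (n m : ℕ) (S : Set (EuclideanSpace ℝ (Fin m)))
    (hSne : S.Nonempty) (hScp : IsCompact S) (hScv : Convex ℝ S)
    (A : Matrix (Fin n) (Fin m) ℝ) (ρ : ℝ) (hρ : 0 < ρ)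
    (v : EuclideanSpace ℝ (Fin n)) :
    (⨅ y : EuclideanSpace ℝ (Fin n),
        (sSup ((fun β => -(inner ℝ y (Matrix.toEuclideanLin A β) : ℝ)) '' S)
          + ρ / 2 * ‖y - v‖ ^ 2))
      = ρ / 2 * ‖v‖ ^ 2
        - 1 / (2 * ρ) * ⨅ β : S,
            ‖Matrix.toEuclideanLin A (β : EuclideanSpace ℝ (Fin m)) + ρ • v‖ ^ 2 := by
  have hρ' : ρ ≠ 0 := ne_of_gt hρ
  set T : EuclideanSpace ℝ (Fin m) →ₗ[ℝ] EuclideanSpace ℝ (Fin n) :=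
    Matrix.toEuclideanLin A with hT
  have hTc : Continuous T := T.continuous_of_finiteDimensional
  haveI : Nonempty S := hSne.to_subtype
  obtain ⟨β₀, hβ₀S, hmin'⟩ := hScp.exists_isMinOn hSne
    (((hTc.add continuous_const).norm).continuousOn :
      ContinuousOn (fun β => ‖T β + ρ • v‖) S)
  have hmin : ∀ β ∈ S, ‖T β₀ + ρ • v‖ ≤ ‖T β + ρ • v‖ := fun β hβ => hmin' hβ
  set w : EuclideanSpace ℝ (Fin n) := T β₀ with hw
  -- variational inequality for projection of -(ρ•v) onto T '' S
  have hKconv : Convex ℝ (T '' S) := hScv.linear_image T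
  have hnorm_eq : ∀ c : EuclideanSpace ℝ (Fin n), ‖-(ρ • v) - c‖ = ‖c + ρ • v‖ := by
    intro c
    rw [← norm_neg]; congr 1; abel
  have hproj : ∀ c ∈ T '' S, (inner ℝ (-(ρ • v) - w) (c - w) : ℝ) ≤ 0 := by
    rw [← norm_eq_iInf_iff_real_inner_le_zero hKconv ⟨β₀, hβ₀S, rfl⟩]
    apply le_antisymm
    · apply le_ciInf
      rintro ⟨c, β, hβ, rfl⟩
      rw [hnorm_eq, hnorm_eq]
      exact hmin β hβ
    · exact ciInf_le ⟨0, fun _ ⟨_, h⟩ => h ▸ norm_nonneg _⟩ (⟨w, β₀, hβ₀S, rfl⟩ : T '' S)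
  set y₀ : EuclideanSpace ℝ (Fin n) := v + ρ⁻¹ • w with hy₀
  have hry₀ : -(ρ • v) - w = -(ρ • y₀) := by
    rw [hy₀, smul_add, smul_smul, mul_inv_cancel₀ hρ', one_smul]
    abel
  -- key inequality: for β ∈ S, ⟪y₀, Tβ⟫ ≥ ⟪y₀, w⟫
  have hkey : ∀ β ∈ S, (inner ℝ y₀ w : ℝ) ≤ inner ℝ y₀ (T β) := by
    intro β hβ
    have := hproj (T β) ⟨β, hβ, rfl⟩
    rw [hry₀, inner_neg_left, real_inner_smul_left, inner_sub_right] at this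
    nlinarith [this]
  -- bddAbove of sup-images
  have hbdd : ∀ y : EuclideanSpace ℝ (Fin n),
      BddAbove ((fun β => -(inner ℝ y (T β) : ℝ)) '' S) := by
    intro y
    exact (hScp.image ((continuous_const.inner hTc).neg)).bddAbove
  -- value of sSup at y₀
  have hsup₀ : sSup ((fun β => -(inner ℝ y₀ (T β) : ℝ)) '' S) = -(inner ℝ y₀ w : ℝ) := by
    apply IsGreatest.csSup_eq
    constructor
    · exact ⟨β₀, hβ₀S, rfl⟩
    · rintro x ⟨β, hβ, rfl⟩
      exact neg_le_neg (hkey β hβ)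
  -- the target value
  set R : ℝ := -(inner ℝ v w : ℝ) - ‖w‖ ^ 2 / (2 * ρ) with hR
  -- lower bound: every F(y) ≥ R
  have hlow : ∀ y : EuclideanSpace ℝ (Fin n),
      R ≤ sSup ((fun β => -(inner ℝ y (T β) : ℝ)) '' S) + ρ / 2 * ‖y - v‖ ^ 2 := by
    intro y
    have h1 : -(inner ℝ y w : ℝ) ≤ sSup ((fun β => -(inner ℝ y (T β) : ℝ)) '' S) :=
      le_csSup (hbdd y) ⟨β₀, hβ₀S, rfl⟩
    have h2 : (0:ℝ) ≤ ‖ρ • (y - v) - w‖ ^ 2 := sq_nonneg _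
    have h3 : ‖ρ • (y - v) - w‖ ^ 2
        = ρ ^ 2 * ‖y - v‖ ^ 2 - 2 * ρ * (inner ℝ (y - v) w : ℝ) + ‖w‖ ^ 2 := by
      rw [norm_sub_sq_real, real_inner_smul_left, norm_smul, Real.norm_eq_abs,
        abs_of_pos hρ]
      ring
    have h4 : (inner ℝ (y - v) w : ℝ) = inner ℝ y w - inner ℝ v w := inner_sub_left _ _ _
    rw [h3, h4] at h2
    have h5 : R ≤ -(inner ℝ y w : ℝ) + ρ / 2 * ‖y - v‖ ^ 2 := by
      rw [hR]
      have hc : ‖w‖ ^ 2 / (2 * ρ) * (2 * ρ) = ‖w‖ ^ 2 := by field_simp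
      nlinarith [h2, hρ, hc]
    linarith
  have hF₀ : sSup ((fun β => -(inner ℝ y₀ (T β) : ℝ)) '' S) + ρ / 2 * ‖y₀ - v‖ ^ 2 = R := by
    rw [hsup₀, hR]
    have : y₀ - v = ρ⁻¹ • w := by rw [hy₀]; abel
    rw [this, norm_smul, Real.norm_eq_abs, abs_of_pos (inv_pos.mpr hρ)]
    have h6 : (inner ℝ y₀ w : ℝ) = inner ℝ v w + ρ⁻¹ * ‖w‖ ^ 2 := by
      rw [hy₀, inner_add_left, real_inner_smul_left, real_inner_self_eq_norm_sq]
    rw [h6]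
    field_simp
    ring
  -- LHS = R
  have hLHS : (⨅ y : EuclideanSpace ℝ (Fin n),
      (sSup ((fun β => -(inner ℝ y (T β) : ℝ)) '' S) + ρ / 2 * ‖y - v‖ ^ 2)) = R := by
    apply le_antisymm
    · exact hF₀ ▸ ciInf_le ⟨R, fun x ⟨y, hy⟩ => hy ▸ hlow y⟩ y₀
    · exact le_ciInf hlow
  -- the iInf over β equals ‖w + ρ•v‖^2
  have hInf : (⨅ β : S, ‖T (β : EuclideanSpace ℝ (Fin m)) + ρ • v‖ ^ 2)
      = ‖w + ρ • v‖ ^ 2 := by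
    apply le_antisymm
    · exact ciInf_le ⟨0, fun x ⟨β, hβ⟩ => hβ ▸ sq_nonneg _⟩ (⟨β₀, hβ₀S⟩ : S)
    · exact le_ciInf fun β => pow_le_pow_left₀ (norm_nonneg _) (hmin β β.2) 2
  -- final arithmetic
  rw [hLHS, hInf, hR]
  have h7 : ‖w + ρ • v‖ ^ 2
      = ‖w‖ ^ 2 + 2 * ρ * (inner ℝ v w : ℝ) + ρ ^ 2 * ‖v‖ ^ 2 := by
    rw [norm_add_sq_real, real_inner_smul_right, norm_smul, Real.norm_eq_abs,
      abs_of_pos hρ, real_inner_comm]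
    ring
  rw [h7]
  field_simp
  ring
end

section
/- Let E = ℝ^n with the Euclidean norm, let f̃ : E → ℝ be convex and continuous, let C ⊆ E be a nonempty compact convex set, and let ρ > 0. Let sequences (y^k), (c^k), (u^k) in E satisfy: c⁰ ∈ C, u⁰ = 0, and for every k, (i) y^{k+1} is the unique minimizer over E of z ↦ f̃(z) + (ρ/2)‖z − c^k + u^k‖², (ii) c^{k+1} is the metric projection of y^{k+1} + u^k onto C, and (iii) u^{k+1} = u^k + y^{k+1} − c^{k+1}. Assume there exist c⋆ ∈ C and u⋆ ∈ E such that f̃(c⋆) ≤ f̃(y) + ρ⟨u⋆, y − c⟩ for all y ∈ E and all c ∈ C. Then as k → ∞: (1) the primal residual satisfies ‖y^{k+1} − c^{k+1}‖ → 0; (2) the dual residual satisfies ρ‖c^{k+1} − c^k‖ → 0; (3) f̃(y^k) → inf_{c ∈ C} f̃(c). -/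
open Filter

/-- First-order optimality condition for the proximal step: if `yy` minimizes
`z ↦ f z + ρ/2 * ‖z - a‖²` and `f` is convex, then for every `z`,
`f yy + ρ * ⟪a - yy, z - yy⟫ ≤ f z`. -/
lemma prox_subgrad {n : ℕ} (f : EuclideanSpace ℝ (Fin n) → ℝ)
    (hf : ConvexOn ℝ Set.univ f) (ρ : ℝ) (hρ : 0 < ρ)
    (yy a : EuclideanSpace ℝ (Fin n))
    (hmin : ∀ z, f yy + ρ / 2 * ‖yy - a‖ ^ 2 ≤ f z + ρ / 2 * ‖z - a‖ ^ 2)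
    (z : EuclideanSpace ℝ (Fin n)) :
    f yy + ρ * (inner ℝ (a - yy) (z - yy) : ℝ) ≤ f z := by
  set I : ℝ := inner ℝ (yy - a) (z - yy) with hI
  set A : ℝ := f z - f yy + ρ * I with hA
  set B : ℝ := ρ / 2 * ‖z - yy‖ ^ 2 with hB
  have hBnn : 0 ≤ B := by positivity
  have key : ∀ t : ℝ, 0 < t → t ≤ 1 → 0 ≤ A + t * B := by
    intro t ht ht1
    have hpt : yy + t • (z - yy) = (1 - t) • yy + t • z := by module
    have hcv : f (yy + t • (z - yy)) ≤ (1 - t) * f yy + t * f z := by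
      rw [hpt]
      exact hf.2 (Set.mem_univ yy) (Set.mem_univ z) (by linarith) ht.le (by ring)
    have hq : ‖(yy + t • (z - yy)) - a‖ ^ 2
        = ‖yy - a‖ ^ 2 + 2 * (t * I) + t ^ 2 * ‖z - yy‖ ^ 2 := by
      have h1 : (yy + t • (z - yy)) - a = (yy - a) + t • (z - yy) := by module
      rw [h1, norm_add_sq_real, real_inner_smul_right, norm_smul,
        Real.norm_eq_abs, mul_pow, sq_abs]
    have hm := hmin (yy + t • (z - yy))
    rw [hq] at hm
    have h2 : 0 ≤ t * (A + t * B) := by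
      have : f yy ≤ (1 - t) * f yy + t * f z
          + ρ / 2 * (2 * (t * I) + t ^ 2 * ‖z - yy‖ ^ 2) := by nlinarith
      rw [hA, hB]; nlinarith
    nlinarith [mul_pos ht ht]
  have hAnn : 0 ≤ A := by
    by_contra hAneg
    push_neg at hAneg
    have hB1 : (0:ℝ) < 2 * B + 1 := by linarith
    set t : ℝ := min 1 ((-A) / (2 * B + 1)) with htdef
    have ht0 : 0 < t := lt_min one_pos (div_pos (by linarith) hB1)
    have ht1 : t ≤ 1 := min_le_left _ _
    have h := key t ht0 ht1
    have ht2 : t ≤ (-A) / (2 * B + 1) := min_le_right _ _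
    have ht3 : t * (2 * B + 1) ≤ -A := by
      rw [← le_div_iff₀ hB1]; exact ht2
    nlinarith
  have hflip : (inner ℝ (a - yy) (z - yy) : ℝ) = -I := by
    rw [hI, ← inner_neg_left, neg_sub]
  rw [hflip]; linarith

set_option maxHeartbeats 2000000 in
/-- Convergence of ADMM for the consensus problem
`minimize f̃(y) + I_C(c) subject to y = c` on `E = ℝ^n` with the Euclidean norm.
Given the ADMM iterates (proximal step, Euclidean projection onto `C`, scaled dual
update) and a saddle point of the unaugmented Lagrangian, the primal residual
`‖y^{k+1} − c^{k+1}‖ → 0`, the dual residual `ρ‖c^{k+1} − c^k‖ → 0`, and the objective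
values `f̃(y^k)` converge to the optimal value `inf_{c ∈ C} f̃(c)`. -/
theorem admm_convergence (n : ℕ)
    (ftil : EuclideanSpace ℝ (Fin n) → ℝ)
    (hfconv : ConvexOn ℝ Set.univ ftil) (hfcont : Continuous ftil)
    (C : Set (EuclideanSpace ℝ (Fin n)))
    (hCne : C.Nonempty) (hCcp : IsCompact C) (hCcv : Convex ℝ C)
    (ρ : ℝ) (hρ : 0 < ρ)
    (y c u : ℕ → EuclideanSpace ℝ (Fin n))
    (hc0 : c 0 ∈ C) (hu0 : u 0 = 0)
    -- (i) y^{k+1} is the unique minimizer over E of z ↦ f̃(z) + (ρ/2)‖z − c^k + u^k‖²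
    (hy : ∀ k, (∀ z : EuclideanSpace ℝ (Fin n),
          ftil (y (k + 1)) + ρ / 2 * ‖y (k + 1) - c k + u k‖ ^ 2
            ≤ ftil z + ρ / 2 * ‖z - c k + u k‖ ^ 2) ∧
        (∀ z : EuclideanSpace ℝ (Fin n),
          (∀ w : EuclideanSpace ℝ (Fin n),
              ftil z + ρ / 2 * ‖z - c k + u k‖ ^ 2 ≤ ftil w + ρ / 2 * ‖w - c k + u k‖ ^ 2)
            → z = y (k + 1)))
    -- (ii) c^{k+1} is the metric projection of y^{k+1} + u^k onto C
    (hc : ∀ k, c (k + 1) ∈ C ∧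
        ∀ w ∈ C, ‖y (k + 1) + u k - c (k + 1)‖ ≤ ‖y (k + 1) + u k - w‖)
    -- (iii) scaled dual update
    (hu : ∀ k, u (k + 1) = u k + y (k + 1) - c (k + 1))
    -- saddle point of the unaugmented Lagrangian
    (cstar ustar : EuclideanSpace ℝ (Fin n)) (hcstar : cstar ∈ C)
    (hsaddle : ∀ yy : EuclideanSpace ℝ (Fin n), ∀ cc ∈ C,
        ftil cstar ≤ ftil yy + ρ * (inner ℝ ustar (yy - cc) : ℝ)) :
    Filter.Tendsto (fun k => ‖y (k + 1) - c (k + 1)‖) Filter.atTop (nhds 0) ∧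
    Filter.Tendsto (fun k => ρ * ‖c (k + 1) - c k‖) Filter.atTop (nhds 0) ∧
    Filter.Tendsto (fun k => ftil (y k)) Filter.atTop (nhds (sInf (ftil '' C))) := by
  -- notation
  set r : ℕ → EuclideanSpace ℝ (Fin n) := fun k => y (k + 1) - c (k + 1) with hrdef
  set d : ℕ → EuclideanSpace ℝ (Fin n) := fun k => c (k + 1) - c k with hddef
  haveI : Nonempty ↑C := hCne.to_subtype
  have hcC : ∀ k, c k ∈ C := by
    intro k; cases k with
    | zero => exact hc0
    | succ m => exact (hc m).1
  have hru : ∀ k, u (k + 1) = u k + r k := by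
    intro k; rw [hu k]; simp only [hrdef]; abel
  -- (ii) variational inequality for projection
  have hproj : ∀ k, ∀ w ∈ C, (inner ℝ (u (k + 1)) (w - c (k + 1)) : ℝ) ≤ 0 := by
    intro k w hw
    set p : EuclideanSpace ℝ (Fin n) := y (k + 1) + u k with hpdef
    have hbdd : BddBelow (Set.range fun w : C => ‖p - (w : EuclideanSpace ℝ (Fin n))‖) := by
      refine ⟨0, ?_⟩; rintro x ⟨w, rfl⟩; exact norm_nonneg _
    have hinf : ‖p - c (k + 1)‖ = ⨅ w : C, ‖p - (w : EuclideanSpace ℝ (Fin n))‖ := by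
      refine le_antisymm (le_ciInf fun w => (hc k).2 w w.2) ?_
      exact ciInf_le hbdd ⟨c (k + 1), (hc k).1⟩
    have hvi := (norm_eq_iInf_iff_real_inner_le_zero hCcv (hc k).1).mp hinf w hw
    have hpu : p - c (k + 1) = u (k + 1) := by rw [hu k, hpdef]; abel
    rwa [hpu] at hvi
  have hP : ∀ k, ∀ w ∈ C, (inner ℝ (u k) (w - c k) : ℝ) ≤ 0 := by
    intro k; cases k with
    | zero => intro w hw; simp [hu0]
    | succ m => exact hproj m
  -- monotonicity cross term
  have F4 : ∀ k, 0 ≤ (inner ℝ (d k) (r k) : ℝ) := by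
    intro k
    have h1 := hproj k (c k) (hcC k)
    have h2 := hP k (c (k + 1)) (hcC (k + 1))
    have e1 : c k - c (k + 1) = -(d k) := by simp [hddef]
    rw [e1, inner_neg_right] at h1
    have e2 : c (k + 1) - c k = d k := rfl
    rw [e2] at h2
    have e3 : (inner ℝ (d k) (r k) : ℝ) = inner ℝ (u (k+1)) (d k) - inner ℝ (u k) (d k) := by
      rw [real_inner_comm, hru k, inner_add_left]
      ring
    rw [e3]; linarith
  -- prox subgradient inequality at cstar (F6 raw)
  have F6raw : ∀ k, ftil (y (k + 1))
      + ρ * (inner ℝ ((c k - u k) - y (k + 1)) (cstar - y (k + 1)) : ℝ) ≤ ftil cstar := by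
    intro k
    have hmin : ∀ z : EuclideanSpace ℝ (Fin n), ftil (y (k + 1)) + ρ / 2 * ‖y (k + 1) - (c k - u k)‖ ^ 2
        ≤ ftil z + ρ / 2 * ‖z - (c k - u k)‖ ^ 2 := by
      intro z
      have e : ∀ w : EuclideanSpace ℝ (Fin n), w - (c k - u k) = w - c k + u k := by intro w; abel
      rw [e, e]; exact (hy k).1 z
    exact prox_subgrad ftil hfconv ρ hρ (y (k + 1)) (c k - u k) hmin cstar
  -- decompose F6raw into atomic inner products
  have F6 : ∀ k, ftil (y (k + 1)) + ρ * (inner ℝ (u (k+1)) (r k) : ℝ)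
      - ρ * (inner ℝ (u (k+1)) (cstar - c (k+1)) : ℝ)
      + ρ * (inner ℝ (d k) (y (k+1) - cstar) : ℝ) ≤ ftil cstar := by
    intro k
    have hsplit : (inner ℝ ((c k - u k) - y (k + 1)) (cstar - y (k + 1)) : ℝ)
        = (inner ℝ (u (k+1)) (r k) : ℝ) - (inner ℝ (u (k+1)) (cstar - c (k+1)) : ℝ)
          + (inner ℝ (d k) (y (k+1) - cstar) : ℝ) := by
      have e1 : (c k - u k) - y (k + 1) = -(u (k+1)) - d k := by
        rw [hu k, hddef]; simp; abel
      have e2 : cstar - y (k + 1) = -(y (k+1) - cstar) := by abel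
      simp only [e1, e2, inner_sub_left, inner_neg_left, inner_neg_right, neg_neg]
      have e3 : y (k + 1) - cstar = r k + (c (k+1) - cstar) := by simp only [hrdef]; abel
      have e4 : (inner ℝ (u (k+1)) (y (k+1) - cstar) : ℝ)
          = (inner ℝ (u (k+1)) (r k) : ℝ) + (inner ℝ (u (k+1)) (c (k+1) - cstar) : ℝ) := by
        rw [e3, inner_add_right]
      have e5 : (inner ℝ (u (k+1)) (c (k+1) - cstar) : ℝ) = -(inner ℝ (u (k+1)) (cstar - c (k+1)) : ℝ) := by
        rw [← inner_neg_right, neg_sub]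
      rw [e4, e5]; ring
    have := F6raw k
    rw [hsplit] at this
    linarith [this]
  -- saddle inequality (F5)
  have F5 : ∀ k, ftil cstar ≤ ftil (y (k + 1)) + ρ * (inner ℝ ustar (r k) : ℝ) := by
    intro k
    have := hsaddle (y (k + 1)) (c (k + 1)) (hcC (k + 1))
    simp only [hrdef]
    convert this using 3
  -- combined inequality (F7)
  have F7 : ∀ k, (inner ℝ (u (k+1) - ustar) (r k) : ℝ) + (inner ℝ (d k) (y (k+1) - cstar) : ℝ) ≤ 0 := by
    intro k
    have h5 := F5 k
    have h6 := F6 k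
    have h2 : ρ * (inner ℝ (u (k+1)) (cstar - c (k+1)) : ℝ) ≤ 0 :=
      mul_nonpos_of_nonneg_of_nonpos hρ.le (hproj k cstar hcstar)
    have hmul : ρ * ((inner ℝ (u (k+1) - ustar) (r k) : ℝ) + (inner ℝ (d k) (y (k+1) - cstar) : ℝ)) ≤ 0 := by
      rw [inner_sub_left]
      nlinarith
    nlinarith
  -- Lyapunov function
  set V : ℕ → ℝ := fun k => ‖u k - ustar‖ ^ 2 + ‖c k - cstar‖ ^ 2 with hVdef
  have hVnn : ∀ k, 0 ≤ V k := fun k => by positivity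
  have F8 : ∀ k, V (k + 1) + ‖r k‖ ^ 2 + ‖d k‖ ^ 2 ≤ V k := by
    intro k
    have id1 : ‖u (k + 1) - ustar‖ ^ 2
        = ‖u k - ustar‖ ^ 2 + 2 * (inner ℝ (u k - ustar) (r k) : ℝ) + ‖r k‖ ^ 2 := by
      have hv : u (k + 1) - ustar = (u k - ustar) + r k := by rw [hru k]; abel
      rw [hv, norm_add_sq_real]
    have id2 : ‖c (k + 1) - cstar‖ ^ 2
        = ‖c k - cstar‖ ^ 2 + 2 * (inner ℝ (c k - cstar) (d k) : ℝ) + ‖d k‖ ^ 2 := by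
      have hv : c (k + 1) - cstar = (c k - cstar) + d k := by simp only [hddef]; abel
      rw [hv, norm_add_sq_real]
    have id3 : (inner ℝ (u (k+1) - ustar) (r k) : ℝ)
        = (inner ℝ (u k - ustar) (r k) : ℝ) + ‖r k‖ ^ 2 := by
      have hv : u (k + 1) - ustar = (u k - ustar) + r k := by rw [hru k]; abel
      rw [hv, inner_add_left, real_inner_self_eq_norm_sq]
    have id4 : (inner ℝ (d k) (y (k+1) - cstar) : ℝ)
        = (inner ℝ (d k) (r k) : ℝ) + (inner ℝ (c k - cstar) (d k) : ℝ) + ‖d k‖ ^ 2 := by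
      have hv : y (k + 1) - cstar = r k + ((c k - cstar) + d k) := by
        simp only [hrdef, hddef]; abel
      rw [hv, inner_add_right, inner_add_right, real_inner_self_eq_norm_sq,
        real_inner_comm (d k) (c k - cstar)]
      ring
    have h7 := F7 k
    have h4 := F4 k
    rw [id3, id4] at h7
    simp only [hVdef]
    linarith [id1, id2]
  have hVmono : ∀ k, V (k + 1) ≤ V k := by
    intro k
    have := F8 k
    nlinarith [sq_nonneg ‖r k‖, sq_nonneg ‖d k‖]
  have hVle : ∀ k, V k ≤ V 0 := by
    intro k
    induction k with
    | zero => exact le_refl _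
    | succ m ih => exact le_trans (hVmono m) ih
  -- summability of residuals
  set a : ℕ → ℝ := fun k => ‖r k‖ ^ 2 + ‖d k‖ ^ 2 with hadef
  have hann : ∀ k, 0 ≤ a k := fun k => by positivity
  have hsumV : ∀ N, (∑ i ∈ Finset.range N, a i) + V N ≤ V 0 := by
    intro N
    induction N with
    | zero => simp
    | succ m ih =>
      rw [Finset.sum_range_succ]
      have h8 := F8 m
      have ham : a m = ‖r m‖ ^ 2 + ‖d m‖ ^ 2 := rfl
      linarith
  have hsum : ∀ N, ∑ i ∈ Finset.range N, a i ≤ V 0 := by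
    intro N; have := hsumV N; have := hVnn N; linarith
  have hsummable : Summable a := summable_of_sum_range_le hann hsum
  have hatend : Tendsto a atTop (nhds 0) := hsummable.tendsto_atTop_zero
  have hr2 : Tendsto (fun k => ‖r k‖ ^ 2) atTop (nhds 0) := by
    refine tendsto_of_tendsto_of_tendsto_of_le_of_le tendsto_const_nhds hatend
      (fun k => sq_nonneg _) (fun k => ?_)
    simp only [hadef]; nlinarith [sq_nonneg ‖d k‖]
  have hd2 : Tendsto (fun k => ‖d k‖ ^ 2) atTop (nhds 0) := by
    refine tendsto_of_tendsto_of_tendsto_of_le_of_le tendsto_const_nhds hatend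
      (fun k => sq_nonneg _) (fun k => ?_)
    simp only [hadef]; nlinarith [sq_nonneg ‖r k‖]
  have sqrt_trick : ∀ (f : ℕ → EuclideanSpace ℝ (Fin n)), Tendsto (fun k => ‖f k‖ ^ 2) atTop (nhds 0)
      → Tendsto (fun k => ‖f k‖) atTop (nhds 0) := by
    intro f hf
    have h : Filter.Tendsto (fun k => Real.sqrt (‖f k‖ ^ 2)) atTop (nhds (Real.sqrt 0)) :=
      (Real.continuous_sqrt.tendsto 0).comp hf
    rw [Real.sqrt_zero] at h
    have he : (fun k => ‖f k‖) = fun k => Real.sqrt (‖f k‖ ^ 2) :=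
      funext fun k => (Real.sqrt_sq (norm_nonneg _)).symm
    rw [he]
    exact h
  have hrn : Tendsto (fun k => ‖r k‖) atTop (nhds 0) := sqrt_trick _ hr2
  have hdn : Tendsto (fun k => ‖d k‖) atTop (nhds 0) := sqrt_trick _ hd2
  -- bounds
  have hV0nn : 0 ≤ V 0 := hVnn 0
  have hsqrtV0 : ∀ (k : ℕ) (x : EuclideanSpace ℝ (Fin n)), ‖x‖ ^ 2 ≤ V k → ‖x‖ ≤ Real.sqrt (V 0) := by
    intro k x hx
    rw [← Real.sqrt_sq (norm_nonneg x)]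
    exact Real.sqrt_le_sqrt (le_trans hx (hVle k))
  set Mu : ℝ := ‖ustar‖ + Real.sqrt (V 0) with hMudef
  have hMu : ∀ k, ‖u k‖ ≤ Mu := by
    intro k
    have h1 : ‖u k - ustar‖ ≤ Real.sqrt (V 0) := by
      refine hsqrtV0 k _ ?_
      simp only [hVdef]; nlinarith [sq_nonneg ‖c k - cstar‖]
    calc ‖u k‖ = ‖(u k - ustar) + ustar‖ := by rw [sub_add_cancel]
      _ ≤ ‖u k - ustar‖ + ‖ustar‖ := norm_add_le _ _
      _ ≤ Mu := by rw [hMudef]; linarith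
  set My : ℝ := 2 * Real.sqrt (V 0) with hMydef
  have hMy : ∀ k, ‖y (k + 1) - cstar‖ ≤ My := by
    intro k
    have h1 : ‖c (k + 1) - cstar‖ ≤ Real.sqrt (V 0) := by
      refine hsqrtV0 (k + 1) _ ?_
      simp only [hVdef]; nlinarith [sq_nonneg ‖u (k+1) - ustar‖]
    have h2 : ‖r k‖ ≤ Real.sqrt (V 0) := by
      refine hsqrtV0 k _ ?_
      have := F8 k
      have := hVnn (k + 1)
      nlinarith [sq_nonneg ‖d k‖]
    calc ‖y (k + 1) - cstar‖ = ‖r k + (c (k + 1) - cstar)‖ := by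
          congr 1; simp only [hrdef]; abel
      _ ≤ ‖r k‖ + ‖c (k + 1) - cstar‖ := norm_add_le _ _
      _ ≤ My := by rw [hMydef]; linarith
  -- optimal value
  have hlb : ∀ x ∈ ftil '' C, ftil cstar ≤ x := by
    rintro x ⟨cc, hcc, rfl⟩
    have := hsaddle cc cc hcc
    simpa using this
  have hsinf : sInf (ftil '' C) = ftil cstar := by
    refine le_antisymm ?_ (le_csInf ⟨ftil cstar, ⟨cstar, hcstar, rfl⟩⟩ hlb)
    exact csInf_le ⟨ftil cstar, hlb⟩ ⟨cstar, hcstar, rfl⟩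
  -- objective convergence bounds
  have hMunn : 0 ≤ Mu := le_trans (norm_nonneg _) (hMu 0)
  have hMynn : 0 ≤ My := le_trans (norm_nonneg _) (hMy 0)
  have hlow : ∀ k, ftil cstar - ρ * ‖ustar‖ * ‖r k‖ ≤ ftil (y (k + 1)) := by
    intro k
    have h5 := F5 k
    have hb : (inner ℝ ustar (r k) : ℝ) ≤ ‖ustar‖ * ‖r k‖ := real_inner_le_norm _ _
    have hb' := mul_le_mul_of_nonneg_left hb hρ.le
    have e : ρ * (‖ustar‖ * ‖r k‖) = ρ * ‖ustar‖ * ‖r k‖ := by ring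
    linarith
  have hup : ∀ k, ftil (y (k + 1)) ≤ ftil cstar + ρ * Mu * ‖r k‖ + ρ * My * ‖d k‖ := by
    intro k
    have h6 := F6 k
    have h2 : ρ * (inner ℝ (u (k+1)) (cstar - c (k+1)) : ℝ) ≤ 0 :=
      mul_nonpos_of_nonneg_of_nonpos hρ.le (hproj k cstar hcstar)
    have hb1 : -(inner ℝ (u (k+1)) (r k) : ℝ) ≤ ‖u (k+1)‖ * ‖r k‖ := by
      have := abs_real_inner_le_norm (u (k+1)) (r k)
      have := neg_abs_le (inner ℝ (u (k+1)) (r k) : ℝ)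
      linarith
    have hb2 : -(inner ℝ (d k) (y (k+1) - cstar) : ℝ) ≤ ‖d k‖ * ‖y (k+1) - cstar‖ := by
      have := abs_real_inner_le_norm (d k) (y (k+1) - cstar)
      have := neg_abs_le (inner ℝ (d k) (y (k+1) - cstar) : ℝ)
      linarith
    have hb3 : ‖u (k+1)‖ * ‖r k‖ ≤ Mu * ‖r k‖ :=
      mul_le_mul_of_nonneg_right (hMu (k+1)) (norm_nonneg _)
    have hb4 : ‖d k‖ * ‖y (k+1) - cstar‖ ≤ ‖d k‖ * My :=
      mul_le_mul_of_nonneg_left (hMy k) (norm_nonneg _)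
    nlinarith
  -- assemble
  have goal1 : Tendsto (fun k => ‖r k‖) atTop (nhds 0) := hrn
  have goal2 : Tendsto (fun k => ρ * ‖d k‖) atTop (nhds 0) := by
    have := hdn.const_mul ρ
    simpa using this
  have goal3' : Tendsto (fun k => ftil (y (k + 1))) atTop (nhds (ftil cstar)) := by
    have hlowt : Tendsto (fun k => ftil cstar - ρ * ‖ustar‖ * ‖r k‖) atTop (nhds (ftil cstar)) := by
      have := hrn.const_mul (ρ * ‖ustar‖)
      have h2 := (tendsto_const_nhds (x := ftil cstar) (f := atTop (α := ℕ))).sub this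
      simpa using h2
    have hupt : Tendsto (fun k => ftil cstar + ρ * Mu * ‖r k‖ + ρ * My * ‖d k‖) atTop
        (nhds (ftil cstar)) := by
      have h1 := hrn.const_mul (ρ * Mu)
      have h2 := hdn.const_mul (ρ * My)
      have h3 := ((tendsto_const_nhds (x := ftil cstar) (f := atTop (α := ℕ))).add h1).add h2
      simpa using h3
    exact tendsto_of_tendsto_of_tendsto_of_le_of_le hlowt hupt hlow hup
  have goal3 : Tendsto (fun k => ftil (y k)) atTop (nhds (sInf (ftil '' C))) := by
    rw [hsinf]
    exact (Filter.tendsto_add_atTop_iff_nat 1).mp goal3'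
  exact ⟨goal1, goal2, goal3⟩
end
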